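/- Conversely, if W ∈ ℝ^{2ⁿ} is a nonzero vector with all entries in {0,1} satisfying W·K^{[n]} = W, then the set C = {v ∈ F₂ⁿ : W[v] = 1} is a self-dual binary code of length n. -/

import Mathlib

open Matrix Finset

noncomputable def Kbit : Matrix (ZMod 2) (ZMod 2) ℝ :=
  fun a b => (1 / Real.sqrt 2) * (if a = 1 ∧ b = 1 then -1 else 1)

noncomputable def Kpow (n : ℕ) : Matrix (Fin n → ZMod 2) (Fin n → ZMod 2) ℝ :=
  fun u v => ∏ i, Kbit (u i) (v i)

def IsSelfDual {n : ℕ} (C : Submodule (ZMod 2) (Fin n → ZMod 2)) : Prop :=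
  ∀ u, u ∈ C ↔ ∀ c ∈ C, ∑ i, u i * c i = 0

noncomputable def sgn (n : ℕ) (u v : Fin n → ZMod 2) : ℝ :=
  ∏ i, (if u i = 1 ∧ v i = 1 then (-1 : ℝ) else 1)

lemma sgn_eq (n : ℕ) (u v : Fin n → ZMod 2) :
    sgn n u v = (-1 : ℝ) ^ (∑ i, (u i * v i).val) := by
  rw [sgn, ← Finset.prod_pow_eq_pow_sum]
  apply Finset.prod_congr rfl
  intro i _
  have hx : ∀ x : ZMod 2, x = 0 ∨ x = 1 := by decide
  rcases hx (u i) with h | h <;> rcases hx (v i) with h' | h' <;>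
    simp [h, h', ZMod.val_one]

lemma sgn_one_iff (n : ℕ) (u v : Fin n → ZMod 2) :
    sgn n u v = 1 ↔ ∑ i, u i * v i = 0 := by
  rw [sgn_eq, neg_one_pow_eq_one_iff_even (by norm_num : (-1 : ℝ) ≠ 1)]
  have h1 : (∑ i, u i * v i : ZMod 2) = ((∑ i, (u i * v i).val : ℕ) : ZMod 2) := by
    rw [Nat.cast_sum]
    exact Finset.sum_congr rfl fun i _ => by rw [ZMod.natCast_val, ZMod.cast_id]
  rw [h1, ZMod.natCast_eq_zero_iff]
  simp [Nat.even_iff, Nat.dvd_iff_mod_eq_zero]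

lemma sgn_cases (n : ℕ) (u v : Fin n → ZMod 2) : sgn n u v = 1 ∨ sgn n u v = -1 := by
  rw [sgn_eq]
  exact (Nat.even_or_odd _).imp Even.neg_one_pow Odd.neg_one_pow

/-- If W ∈ ℝ^{2ⁿ} is a nonzero vector with entries in {0,1} satisfying
W·K^{[n]} = W, then {v ∈ F₂ⁿ : W v = 1} is a self-dual binary code of length n. -/
theorem stmt_8 (n : ℕ) (W : (Fin n → ZMod 2) → ℝ) (hne : W ≠ 0)
    (h01 : ∀ v, W v = 0 ∨ W v = 1) (hW : vecMul W (Kpow n) = W) :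
    ∃ C : Submodule (ZMod 2) (Fin n → ZMod 2),
      IsSelfDual C ∧ ∀ v, v ∈ C ↔ W v = 1 := by
  classical
  have hs : (0 : ℝ) < Real.sqrt 2 := Real.sqrt_pos.2 two_pos
  have hsn : (0 : ℝ) < Real.sqrt 2 ^ n := pow_pos hs n
  -- key equation
  have key : ∀ v, ∑ u, W u * sgn n u v = Real.sqrt 2 ^ n * W v := by
    intro v
    have h := congrFun hW v
    have hk : ∀ u, Kpow n u v = (1 / Real.sqrt 2) ^ n * sgn n u v := by
      intro u
      rw [Kpow, sgn]
      simp only [Kbit]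
      rw [Finset.prod_mul_distrib, Finset.prod_const, Finset.card_univ, Fintype.card_fin]
    simp only [vecMul, dotProduct, hk] at h
    have h2 : (1 / Real.sqrt 2) ^ n * ∑ u, W u * sgn n u v = W v := by
      rw [Finset.mul_sum]
      rw [← h]
      apply Finset.sum_congr rfl
      intro u _
      ring
    have hne' : (1 / Real.sqrt 2 : ℝ) ^ n ≠ 0 := by positivity
    field_simp at h2
    rw [← h2, ← mul_assoc, ← mul_pow, mul_one_div_cancel hs.ne', one_pow, one_mul]
  have hWnn : ∀ v, 0 ≤ W v := by
    intro v; rcases h01 v with h | h <;> rw [h] <;> norm_num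
  obtain ⟨u0, hu0⟩ : ∃ u, W u ≠ 0 := Function.ne_iff.mp hne
  have hu0' : W u0 = 1 := (h01 u0).resolve_left hu0
  have hsgn0 : ∀ u, sgn n u (0 : Fin n → ZMod 2) = 1 := by
    intro u
    rw [sgn]
    apply Finset.prod_eq_one
    intro i _
    simp
  have htotal : ∑ u, W u = Real.sqrt 2 ^ n * W 0 := by
    have := key 0
    simpa [hsgn0] using this
  have htpos : 0 < ∑ u, W u :=
    Finset.sum_pos' (fun u _ => hWnn u) ⟨u0, Finset.mem_univ u0, by rw [hu0']; norm_num⟩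
  have hW0 : W 0 = 1 := by
    rcases h01 0 with h | h
    · rw [h] at htotal; simp at htotal; linarith
    · exact h
  have htotal' : ∑ u, W u = Real.sqrt 2 ^ n := by rw [htotal, hW0, mul_one]
  -- Claim A
  have claimA : ∀ v, W v = 1 → ∀ u, W u = 1 → sgn n u v = 1 := by
    intro v hv u hu
    by_contra hne1
    have hsu : sgn n u v = -1 := (sgn_cases n u v).resolve_left hne1
    have hle : ∀ w : Fin n → ZMod 2, W w * sgn n w v ≤ W w := by
      intro w
      rcases h01 w with h | h
      · rw [h]; simp
      · rw [h, one_mul]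
        rcases sgn_cases n w v with h' | h' <;> rw [h'] <;> norm_num
    have hlt : ∑ w, W w * sgn n w v < ∑ w, W w :=
      Finset.sum_lt_sum (fun w _ => hle w)
        ⟨u, Finset.mem_univ u, by rw [hu, hsu]; norm_num⟩
    rw [key v, hv, mul_one, htotal'] at hlt
    exact lt_irrefl _ hlt
  -- Claim B
  have claimB : ∀ v, (∀ u, W u = 1 → sgn n u v = 1) → W v = 1 := by
    intro v h
    have : ∑ u, W u * sgn n u v = ∑ u, W u := by
      apply Finset.sum_congr rfl
      intro u _
      rcases h01 u with h' | h'
      · rw [h']; ring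
      · rw [h u h', mul_one]
    rw [key v, htotal'] at this
    have := mul_left_cancel₀ (ne_of_gt hsn) (by linarith : Real.sqrt 2 ^ n * W v = Real.sqrt 2 ^ n * 1)
    simpa using this
  have hmem : ∀ v, W v = 1 ↔ ∀ c, W c = 1 → ∑ i, v i * c i = 0 := by
    intro v
    constructor
    · intro hv c hc
      have := claimA v hv c hc
      rw [sgn_one_iff] at this
      rw [← this]
      exact Finset.sum_congr rfl fun i _ => mul_comm _ _
    · intro h
      apply claimB
      intro u hu
      rw [sgn_one_iff]
      rw [← h u hu]
      exact Finset.sum_congr rfl fun i _ => mul_comm _ _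
  refine ⟨⟨⟨⟨{v | ∀ c, W c = 1 → ∑ i, v i * c i = 0}, ?_⟩, ?_⟩, ?_⟩, ?_, ?_⟩
  · intro a b ha hb c hc
    have := ha c hc
    have := hb c hc
    simp only [Pi.add_apply, add_mul, Finset.sum_add_distrib]
    rw [ha c hc, hb c hc, add_zero]
  · intro c hc
    simp
  · intro a v hv c hc
    have h := hv c hc
    simp only [Pi.smul_apply, smul_eq_mul, mul_assoc, ← Finset.mul_sum, h, mul_zero]
  · intro u
    constructor
    · intro hu c hc
      exact hu c ((hmem c).mpr (fun d hd => hc d hd))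
    · intro hu c hc
      exact hu c ((hmem c).mp hc)
    -- membership in C is the set condition
  · intro v
    exact (hmem v).symm
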